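/- Let C_n = {0,1}^n with Hamming distance d and uniform probability measure μ. For every x ∈ ℝ, sup over all 1-Lipschitz f : C_n → ℝ of μ{u : f(u) - E_μ f ≥ x} equals max over nonempty subsets A ⊆ C_n of μ{u : -d(A,u) + E_μ d(A,·) ≥ x}. -/

import Mathlib

open MeasureTheory
open scoped ENNReal

theorem stmt_8 (n : ℕ) (x : ℝ)
    (μ : @Measure (Hamming (fun _ : Fin n => Bool)) ⊤)
    (hμ : μ = ((Fintype.card (Hamming (fun _ : Fin n => Bool)) : ℝ≥0∞))⁻¹ •
      @Measure.count (Hamming (fun _ : Fin n => Bool)) ⊤) :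
    (⨆ (f : Hamming (fun _ : Fin n => Bool) → ℝ)
        (_ : ∀ u v, |f u - f v| ≤ dist u v),
        μ {u | f u - ∫ v, f v ∂μ ≥ x}) =
    ⨆ (A : Set (Hamming (fun _ : Fin n => Bool))) (_ : A.Nonempty),
        μ {u | -Metric.infDist u A + ∫ v, Metric.infDist v A ∂μ ≥ x} := by
  letI : MeasurableSpace (Hamming (fun _ : Fin n => Bool)) := ⊤
  haveI : MeasurableSingletonClass (Hamming (fun _ : Fin n => Bool)) := ⟨fun _ => trivial⟩
  have hprob : IsProbabilityMeasure μ := by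
    constructor
    rw [hμ]
    simp only [Measure.smul_apply, Measure.count_univ, smul_eq_mul]
    rw [ENat.card_eq_coe_fintype_card, ENat.toENNReal_coe]
    rw [ENNReal.inv_mul_cancel]
    · exact_mod_cast Fintype.card_ne_zero
    · exact ENNReal.natCast_ne_top _
  have hint : ∀ g : Hamming (fun _ : Fin n => Bool) → ℝ, Integrable g μ := fun g => .of_finite
  apply le_antisymm
  · refine iSup_le fun f => iSup_le fun hf => ?_
    set I := ∫ v, f v ∂μ with hI
    set A : Set (Hamming (fun _ : Fin n => Bool)) := {u | f u - I ≥ x} with hA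
    rcases A.eq_empty_or_nonempty with h | h
    · rw [h]
      simp
    · have hkey : ∀ v, x + (I - f v) ≤ Metric.infDist v A := by
        intro v
        rw [Metric.infDist_eq_iInf]
        haveI : Nonempty A := h.to_subtype
        refine le_ciInf fun ⟨a, ha⟩ => ?_
        have h1 : |f a - f v| ≤ dist a v := hf a v
        have h2 : x ≤ f a - I := ha
        have h3 := (abs_le.mp h1).2
        rw [dist_comm] at h3
        linarith
      have hc : ∫ v, (x + (I - f v)) ∂μ = x := by
        have e : (fun v => x + (I - f v)) = fun v => (x + I) - f v := by funext v; ring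
        rw [e, integral_sub (integrable_const _) (hint f), integral_const]
        simp [← hI]
      have hintle : x ≤ ∫ v, Metric.infDist v A ∂μ := by
        have := integral_mono (μ := μ) (hint _) (hint _) hkey
        rwa [hc] at this
      refine le_trans ?_ (le_iSup_of_le A (le_iSup_of_le h le_rfl))
      refine measure_mono fun u hu => ?_
      have h0 : Metric.infDist u A = 0 := Metric.infDist_zero_of_mem hu
      simp only [Set.mem_setOf_eq, h0, neg_zero, zero_add]
      exact hintle
  · refine iSup_le fun A => iSup_le fun hA => ?_
    set f : Hamming (fun _ : Fin n => Bool) → ℝ := fun u => -Metric.infDist u A with hf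
    have hlip : ∀ u v, |f u - f v| ≤ dist u v := by
      intro u v
      have h1 := (Metric.lipschitz_infDist_pt A).dist_le_mul u v
      rw [Real.dist_eq, NNReal.coe_one, one_mul] at h1
      show |-Metric.infDist u A - -Metric.infDist v A| ≤ dist u v
      rw [neg_sub_neg, abs_sub_comm]
      exact h1
    refine le_trans (le_of_eq ?_) (le_iSup_of_le f (le_iSup_of_le hlip le_rfl))
    congr 1
    ext u
    simp only [Set.mem_setOf_eq, hf, integral_neg]
    constructor <;> intro h <;> linarith
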